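/- arXiv:2510.03470 — 6 statements merged into one kernel-verified Lean document; each statement's English description precedes it below -/
import Mathlib

section
/- Let d, n ∈ ℕ and let F_1, …, F_n : ℝ^d → ℝ^d each be three times continuously differentiable (ContDiff ℝ 3). For λ ∈ ℝ let R_λ = (id + λF_n) ∘ ⋯ ∘ (id + λF_1) be the residual tower. Then for every z ∈ ℝ^d, the function λ ↦ R_λ(z) − ( z + λ·Σ_{i=1}^n F_i(z) + λ²·Σ_{1 ≤ i < j ≤ n} (D F_j)(z)(F_i(z)) ) is O(λ³) as λ → 0, where (D F_j)(z) denotes the Fréchet derivative of F_j at z. -/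
open Topology Asymptotics Finset

/-- A single residual block `(1 + λ F)(z) = z + λ • F z`. -/
noncomputable def resBlock {d : ℕ} (lam : ℝ)
    (F : EuclideanSpace ℝ (Fin d) → EuclideanSpace ℝ (Fin d)) :
    EuclideanSpace ℝ (Fin d) → EuclideanSpace ℝ (Fin d) :=
  fun z => z + lam • F z

/-- The residual tower `(1 + λ F_m) ∘ ⋯ ∘ (1 + λ F_1)` built from the blocks
`F 1, …, F m` (the index `0` block is never used). -/
noncomputable def resTower {d : ℕ} (lam : ℝ)
    (F : ℕ → EuclideanSpace ℝ (Fin d) → EuclideanSpace ℝ (Fin d)) :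
    ℕ → EuclideanSpace ℝ (Fin d) → EuclideanSpace ℝ (Fin d)
  | 0 => id
  | m + 1 => resBlock lam (F (m + 1)) ∘ resTower lam F m

section Aux

variable {E G : Type*} [NormedAddCommGroup E] [NormedSpace ℝ E]
  [NormedAddCommGroup G] [NormedSpace ℝ G]

/-- `λ ↦ c λ • v` is big-O of `c`. -/
lemma smul_const_isBigO (c : ℝ → ℝ) (v : G) (l : Filter ℝ) :
    (fun t => c t • v) =O[l] c := by
  rw [Asymptotics.isBigO_iff]
  refine ⟨‖v‖, Filter.Eventually.of_forall fun t => ?_⟩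
  rw [norm_smul]
  simp [mul_comm]

/-- powers : `λ^j = O(λ^i)` near `0` when `i ≤ j`. -/
lemma pow_isBigO_pow {i j : ℕ} (h : i ≤ j) :
    (fun t : ℝ => t ^ j) =O[𝓝 0] fun t => t ^ i := by
  rcases h.eq_or_lt with rfl | h
  · exact isBigO_refl _ _
  · exact (Asymptotics.isLittleO_pow_pow h).isBigO

/-- Second-order Taylor bound for a `C²` map. -/
lemma taylor2 {f : E → G} (hf : ContDiff ℝ 2 f) (z : E) :
    (fun y => f y - f z - fderiv ℝ f z (y - z)) =O[𝓝 z] fun y => ‖y - z‖ ^ 2 := by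
  have hf1 : ContDiff ℝ 1 (fderiv ℝ f) := hf.fderiv_right (by norm_num)
  obtain ⟨K, t, ht, hK⟩ := (hf1.contDiffAt (x := z)).exists_lipschitzOnWith
  obtain ⟨ε, hε, hball⟩ := Metric.mem_nhds_iff.1 ht
  rw [Asymptotics.isBigO_iff]
  refine ⟨K, ?_⟩
  filter_upwards [Metric.ball_mem_nhds z hε] with y hy
  have hyz : ‖y - z‖ < ε := by simpa [dist_eq_norm] using hy
  have hsub : Metric.closedBall z ‖y - z‖ ⊆ t :=
    (Metric.closedBall_subset_ball hyz).trans hball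
  have hdiff : ∀ x ∈ Metric.closedBall z ‖y - z‖, DifferentiableAt ℝ f x :=
    fun x _ => (hf.differentiable (by norm_num)).differentiableAt
  have hbound : ∀ x ∈ Metric.closedBall z ‖y - z‖,
      ‖fderiv ℝ f x - fderiv ℝ f z‖ ≤ K * ‖y - z‖ := by
    intro x hx
    have h1 : dist (fderiv ℝ f x) (fderiv ℝ f z) ≤ K * dist x z :=
      hK.dist_le_mul x (hsub hx) z (hsub (Metric.mem_closedBall_self (norm_nonneg _)))
    rw [dist_eq_norm] at h1
    refine h1.trans ?_
    have : dist x z ≤ ‖y - z‖ := Metric.mem_closedBall.1 hx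
    exact mul_le_mul_of_nonneg_left this K.coe_nonneg
  have := (convex_closedBall z ‖y - z‖).norm_image_sub_le_of_norm_fderiv_le'
    hdiff hbound (Metric.mem_closedBall_self (norm_nonneg _))
    (Metric.mem_closedBall.2 (by rw [dist_eq_norm]))
  calc ‖f y - f z - (fderiv ℝ f z) (y - z)‖ ≤ K * ‖y - z‖ * ‖y - z‖ := this
    _ = K * ‖‖y - z‖ ^ 2‖ := by
        rw [norm_pow, norm_norm]; ring

/-- Second-order Taylor bound along a curve `c` with `c λ - z = O(λ)`. -/
lemma taylor2_curve {f : E → G} (hf : ContDiff ℝ 2 f) (z : E) {c : ℝ → E}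
    (hc : (fun t => c t - z) =O[𝓝 (0 : ℝ)] fun t => t) :
    (fun t => f (c t) - f z - fderiv ℝ f z (c t - z)) =O[𝓝 (0 : ℝ)] fun t => t ^ 2 := by
  have hc0 : Filter.Tendsto c (𝓝 0) (𝓝 z) := by
    have h0 : Filter.Tendsto (fun t => c t - z) (𝓝 (0 : ℝ)) (𝓝 (0 : E)) :=
      hc.trans_tendsto (Filter.tendsto_id (x := 𝓝 (0 : ℝ)))
    have := h0.add_const z
    simpa using this
  have h1 := (taylor2 hf z).comp_tendsto hc0
  refine h1.trans ?_
  have h2 : (fun t => ‖c t - z‖ ^ 2) =O[𝓝 (0 : ℝ)] fun t => t ^ 2 := by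
    simpa using hc.norm_left.pow 2
  exact h2

end Aux

/-- **Residual tower expansion.** For `C³` residual branches `F_1, …, F_n`, at every
point `z` the residual tower satisfies
`R_λ(z) = z + λ ∑ᵢ Fᵢ(z) + λ² ∑_{i<j} (D F_j)(z)(Fᵢ(z)) + O(λ³)` as `λ → 0`. -/
theorem residual_tower_expansion (d n : ℕ)
    (F : ℕ → EuclideanSpace ℝ (Fin d) → EuclideanSpace ℝ (Fin d))
    (hF : ∀ i ∈ Finset.Icc 1 n, ContDiff ℝ 3 (F i))
    (z : EuclideanSpace ℝ (Fin d)) :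
    (fun lam : ℝ =>
        resTower lam F n z -
          (z + lam • ∑ i ∈ Finset.Icc 1 n, F i z
             + lam ^ 2 •
               ∑ p ∈ (Finset.Icc 1 n ×ˢ Finset.Icc 1 n).filter (fun p => p.1 < p.2),
                 fderiv ℝ (F p.2) z (F p.1 z)))
      =O[𝓝 0] (fun lam : ℝ => lam ^ 3) := by
  suffices H : ∀ m, m ≤ n →
      (fun lam : ℝ =>
        resTower lam F m z -
          (z + lam • ∑ i ∈ Finset.Icc 1 m, F i z
             + lam ^ 2 •
               ∑ p ∈ (Finset.Icc 1 m ×ˢ Finset.Icc 1 m).filter (fun p => p.1 < p.2),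
                 fderiv ℝ (F p.2) z (F p.1 z)))
      =O[𝓝 0] (fun lam : ℝ => lam ^ 3) from H n le_rfl
  intro m hmn
  induction m with
  | zero =>
      have : Finset.Icc 1 0 = (∅ : Finset ℕ) := by decide
      simp only [resTower, this, Finset.empty_product, Finset.filter_empty,
        Finset.sum_empty, id_eq, smul_zero, add_zero]
      simpa using (Asymptotics.isBigO_zero (g := fun lam : ℝ => lam ^ 3)
        (l := 𝓝 (0 : ℝ)) (E' := EuclideanSpace ℝ (Fin d)))
  | succ m IH =>
      have hm : m ≤ n := Nat.le_of_succ_le hmn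
      have IHm := IH hm
      set A : EuclideanSpace ℝ (Fin d) := ∑ i ∈ Finset.Icc 1 m, F i z with hA
      set B : EuclideanSpace ℝ (Fin d) :=
        ∑ p ∈ (Finset.Icc 1 m ×ˢ Finset.Icc 1 m).filter (fun p => p.1 < p.2),
          fderiv ℝ (F p.2) z (F p.1 z) with hB
      set T : ℝ → EuclideanSpace ℝ (Fin d) := fun lam => resTower lam F m z with hT
      set Er : ℝ → EuclideanSpace ℝ (Fin d) :=
        fun lam => T lam - (z + lam • A + lam ^ 2 • B) with hEr
      have hErO : Er =O[𝓝 0] fun lam : ℝ => lam ^ 3 := IHm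
      have hmem : m + 1 ∈ Finset.Icc 1 n := by
        simp only [Finset.mem_Icc]; omega
      have hFm : ContDiff ℝ 3 (F (m + 1)) := hF _ hmem
      have hFm2 : ContDiff ℝ 2 (F (m + 1)) := hFm.of_le (by norm_num)
      set D : EuclideanSpace ℝ (Fin d) →L[ℝ] EuclideanSpace ℝ (Fin d) :=
        fderiv ℝ (F (m + 1)) z with hD
      -- T lam - z = O(lam)
      have hTz : (fun lam => T lam - z) =O[𝓝 (0 : ℝ)] fun lam => lam := by
        have h1 : (fun lam : ℝ => Er lam + (lam • A + lam ^ 2 • B))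
            =O[𝓝 (0 : ℝ)] fun lam => lam := by
          refine ((hErO.trans (pow_isBigO_pow (by norm_num : 1 ≤ 3))).add
            ((((smul_const_isBigO (fun lam : ℝ => lam) A _)).congr_right
                (fun t => (pow_one t).symm)).add
              ((smul_const_isBigO (fun lam : ℝ => lam ^ 2) B _).trans
                (pow_isBigO_pow (by norm_num : 1 ≤ 2))))).congr_right ?_
          intro lam; simp [pow_one]
        refine h1.congr_left fun lam => ?_
        simp only [hEr]; abel
      -- quadratic remainder
      have hQ : (fun lam => F (m + 1) (T lam) - F (m + 1) z - D (T lam - z))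
          =O[𝓝 (0 : ℝ)] fun lam => lam ^ 2 := taylor2_curve hFm2 z hTz
      -- sum decompositions
      have hsumA : ∑ i ∈ Finset.Icc 1 (m + 1), F i z = A + F (m + 1) z := by
        rw [hA, Finset.sum_Icc_succ_top (by omega : 1 ≤ m + 1)]
      have hsetEq : (Finset.Icc 1 (m + 1) ×ˢ Finset.Icc 1 (m + 1)).filter
            (fun p => p.1 < p.2)
          = ((Finset.Icc 1 m ×ˢ Finset.Icc 1 m).filter (fun p => p.1 < p.2))
            ∪ (Finset.Icc 1 m ×ˢ {m + 1}) := by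
        ext ⟨a, b⟩
        simp only [Finset.mem_filter, Finset.mem_product, Finset.mem_Icc,
          Finset.mem_union, Finset.mem_singleton]
        omega
      have hdisj : Disjoint
          ((Finset.Icc 1 m ×ˢ Finset.Icc 1 m).filter (fun p => p.1 < p.2))
          (Finset.Icc 1 m ×ˢ ({m + 1} : Finset ℕ)) := by
        rw [Finset.disjoint_left]
        rintro ⟨a, b⟩ h1 h2
        simp only [Finset.mem_filter, Finset.mem_product, Finset.mem_Icc] at h1
        simp only [Finset.mem_product, Finset.mem_Icc, Finset.mem_singleton] at h2
        omega
      have hsumB : ∑ p ∈ (Finset.Icc 1 (m + 1) ×ˢ Finset.Icc 1 (m + 1)).filter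
            (fun p => p.1 < p.2), fderiv ℝ (F p.2) z (F p.1 z)
          = B + D A := by
        rw [hsetEq, Finset.sum_union hdisj]
        congr 1
        rw [hA, map_sum]
        rw [Finset.sum_product]
        simp [hD]
      -- key pointwise identity
      have key : ∀ lam : ℝ,
          resTower lam F (m + 1) z -
            (z + lam • ∑ i ∈ Finset.Icc 1 (m + 1), F i z
              + lam ^ 2 •
                ∑ p ∈ (Finset.Icc 1 (m + 1) ×ˢ Finset.Icc 1 (m + 1)).filter
                  (fun p => p.1 < p.2), fderiv ℝ (F p.2) z (F p.1 z))
          = Er lam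
            + lam • (F (m + 1) (T lam) - F (m + 1) z - D (T lam - z))
            + lam • D (Er lam)
            + lam ^ 3 • D B := by
        intro lam
        have hstep : resTower lam F (m + 1) z = T lam + lam • F (m + 1) (T lam) := rfl
        rw [hstep, hsumA, hsumB]
        have hDsplit : D (T lam - z) = D (Er lam) + lam • D A + lam ^ 2 • D B := by
          have : T lam - z = Er lam + lam • A + lam ^ 2 • B := by
            simp only [hEr]; abel
          rw [this, map_add, map_add, map_smul, map_smul]
        rw [hDsplit]
        simp only [hEr, smul_add, smul_sub, smul_smul]
        module
      -- assemble the big-O estimates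
      have h1 : Er =O[𝓝 (0 : ℝ)] fun lam => lam ^ 3 := hErO
      have h2 : (fun lam : ℝ =>
            lam • (F (m + 1) (T lam) - F (m + 1) z - D (T lam - z)))
          =O[𝓝 (0 : ℝ)] fun lam => lam ^ 3 := by
        refine ((Asymptotics.isBigO_refl (fun lam : ℝ => lam) _).smul hQ).congr_right ?_
        intro lam; simp [smul_eq_mul]; ring
      have h3 : (fun lam : ℝ => lam • D (Er lam))
          =O[𝓝 (0 : ℝ)] fun lam => lam ^ 3 := by
        have hDE : (fun lam => D (Er lam)) =O[𝓝 (0 : ℝ)] fun lam => lam ^ 3 :=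
          (D.isBigO_comp Er _).trans hErO
        have := (Asymptotics.isBigO_refl (fun lam : ℝ => lam) (𝓝 0)).smul hDE
        refine (this.trans ?_)
        refine (pow_isBigO_pow (by norm_num : 3 ≤ 4)).congr_left fun lam => ?_
        simp [smul_eq_mul]; ring
      have h4 : (fun lam : ℝ => lam ^ 3 • D B) =O[𝓝 (0 : ℝ)] fun lam => lam ^ 3 :=
        smul_const_isBigO _ _ _
      have htotal := ((h1.add h2).add h3).add h4
      exact htotal.congr_left fun lam => (key lam).symm
end

section
/- Let p, d, q, n ∈ ℕ, let E : ℝ^p → ℝ^d be any map, let F_1, …, F_n : ℝ^d → ℝ^d each be three times continuously differentiable (ContDiff ℝ 3), let W : ℝ^d → ℝ^q be a continuous linear map and b ∈ ℝ^q, and define the decoder D(z) = W z + b. For λ ∈ ℝ let R_λ = (id + λF_n) ∘ ⋯ ∘ (id + λF_1) and let f_λ(x) = D(R_λ(E(x))). Then for every x ∈ ℝ^p, the function λ ↦ f_λ(x) − ( D(E(x)) + λ·Σ_{i=1}^n W(F_i(E(x))) + λ²·Σ_{1 ≤ i < j ≤ n} W((D F_j)(E(x))(F_i(E(x)))) ) is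 O(λ³) as λ → 0. -/
open Topology Asymptotics Finset

lemma sq_bigO_lin : (fun l : ℝ => l ^ 2) =O[𝓝 0] (fun l : ℝ => l) := by
  rw [Asymptotics.isBigO_iff]
  refine ⟨1, ?_⟩
  filter_upwards [Metric.ball_mem_nhds (0:ℝ) one_pos] with l hl
  simp only [Metric.mem_ball, Real.dist_eq, sub_zero] at hl
  have h1 : |l| ≤ 1 := le_of_lt hl
  simp only [Real.norm_eq_abs, abs_pow, one_mul]
  calc |l|^2 = |l| * |l| := by ring
  _ ≤ 1 * |l| := by nlinarith [abs_nonneg l]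
  _ = |l| := one_mul _

lemma cube_bigO_sq : (fun l : ℝ => l ^ 3) =O[𝓝 0] (fun l : ℝ => l ^ 2) := by
  rw [Asymptotics.isBigO_iff]
  refine ⟨1, ?_⟩
  filter_upwards [Metric.ball_mem_nhds (0:ℝ) one_pos] with l hl
  simp only [Metric.mem_ball, Real.dist_eq, sub_zero] at hl
  simp only [Real.norm_eq_abs, abs_pow, one_mul]
  have h1 : |l| ≤ 1 := le_of_lt hl
  have := abs_nonneg l
  calc |l|^3 = |l|^2 * |l| := by ring
  _ ≤ |l|^2 * 1 := by nlinarith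
  _ = |l|^2 := by ring

variable {Ev : Type*} [NormedAddCommGroup Ev] [NormedSpace ℝ Ev]

/-- second-order approximation lemma -/
lemma quad_approx (f : Ev → Ev) (hf : ContDiff ℝ 2 f) (z0 v : Ev) (g : ℝ → Ev)
    (hg : (fun l => g l - (z0 + l • v)) =O[𝓝 0] fun l => l ^ 2) :
    (fun l => f (g l) - (f z0 + l • fderiv ℝ f z0 v)) =O[𝓝 0] fun l => l ^ 2 := by
  have hgl : (fun l => g l - z0) =O[𝓝 0] fun l => l := by
    have h1 : (fun l : ℝ => l • v) =O[𝓝 0] fun l => l := by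
      apply Asymptotics.isBigO_of_le' (c := ‖v‖)
      intro l
      rw [norm_smul, mul_comm]
    have h2 := (hg.trans sq_bigO_lin).add h1
    refine h2.congr_left fun l => ?_
    abel
  -- g tends to z0
  have hgtend : Filter.Tendsto g (𝓝 0) (𝓝 z0) := by
    have : Filter.Tendsto (fun l => g l - z0) (𝓝 0) (𝓝 0) := by
      apply hgl.trans_tendsto
      exact (continuous_id.tendsto (0:ℝ))
    have := this.add_const z0
    simpa using this
  -- Lipschitz bound on fderiv near z0
  have hfd : ContDiff ℝ 1 (fderiv ℝ f) := hf.fderiv_right (m := 1) (by norm_num)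
  obtain ⟨K, t, ht, hlip⟩ := (hfd.contDiffAt (x := z0)).exists_lipschitzOnWith
  obtain ⟨r, hr0, hrt⟩ := Metric.nhds_basis_closedBall.mem_iff.mp ht
  -- pointwise quadratic bound on the closed ball
  have key : ∀ y ∈ Metric.closedBall z0 r,
      ‖f y - f z0 - (fderiv ℝ f z0) (y - z0)‖ ≤ K * ‖y - z0‖ * ‖y - z0‖ := by
    intro y hy
    have hconv : Convex ℝ (Metric.closedBall z0 ‖y - z0‖) := convex_closedBall _ _
    have hsub : Metric.closedBall z0 ‖y - z0‖ ⊆ t := by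
      refine subset_trans ?_ hrt
      apply Metric.closedBall_subset_closedBall
      simpa [dist_eq_norm] using hy
    have := hconv.norm_image_sub_le_of_norm_fderiv_le'
      (f := f) (φ := fderiv ℝ f z0) (C := K * ‖y - z0‖)
      (fun z _ => hf.differentiable (by norm_num) z)
      (fun z hz => by
        have hz' : z ∈ t := hsub hz
        have hz0' : z0 ∈ t := hsub (by simp)
        have := hlip.dist_le_mul z hz' z0 hz0'
        rw [dist_eq_norm, dist_eq_norm] at this
        calc ‖fderiv ℝ f z - fderiv ℝ f z0‖ ≤ K * ‖z - z0‖ := this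
        _ ≤ K * ‖y - z0‖ := by
            have : ‖z - z0‖ ≤ ‖y - z0‖ := by simpa [dist_eq_norm] using hz
            exact mul_le_mul_of_nonneg_left this K.2)
      (Metric.mem_closedBall_self (norm_nonneg _))
      (show y ∈ Metric.closedBall z0 ‖y - z0‖ by simp [Metric.mem_closedBall, dist_eq_norm])
    exact this
  -- assemble
  have h1 : (fun l => f (g l) - f z0 - (fderiv ℝ f z0) (g l - z0)) =O[𝓝 0] fun l => l ^ 2 := by
    have hq : (fun l => f (g l) - f z0 - (fderiv ℝ f z0) (g l - z0))
        =O[𝓝 0] fun l => ‖g l - z0‖ * ‖g l - z0‖ := by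
      rw [Asymptotics.isBigO_iff]
      refine ⟨K, ?_⟩
      have hev : ∀ᶠ l in 𝓝 (0:ℝ), g l ∈ Metric.closedBall z0 r :=
        hgtend (Metric.closedBall_mem_nhds z0 hr0)
      filter_upwards [hev] with l hl
      have := key (g l) hl
      simpa [Real.norm_eq_abs, abs_mul, abs_of_nonneg (norm_nonneg (g l - z0)), mul_assoc]
        using this
    refine hq.trans ?_
    have := hgl.norm_left.mul hgl.norm_left
    simpa [pow_two] using this
  have h2 : (fun l => (fderiv ℝ f z0) (g l - (z0 + l • v))) =O[𝓝 0] fun l => l ^ 2 :=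
    ((fderiv ℝ f z0).isBigO_comp _ _).trans hg
  have := h1.add h2
  refine Asymptotics.IsBigO.congr' this ?_ (by rfl)
  filter_upwards with l
  have : (fderiv ℝ f z0) (g l - (z0 + l • v))
      = (fderiv ℝ f z0) (g l - z0) - l • (fderiv ℝ f z0) v := by
    rw [show g l - (z0 + l • v) = (g l - z0) - l • v by abel, map_sub, map_smul]
  rw [this]; abel

lemma filter_pairs_succ (m : ℕ) :
    ((Icc 1 (m+1) ×ˢ Icc 1 (m+1)).filter fun p : ℕ × ℕ => p.1 < p.2)
      = ((Icc 1 m ×ˢ Icc 1 m).filter fun p => p.1 < p.2)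
        ∪ (Icc 1 m).image (fun i => (i, m+1)) := by
  ext ⟨i, j⟩
  simp only [Finset.mem_filter, Finset.mem_product, Finset.mem_union, Finset.mem_image,
    Finset.mem_Icc, Prod.mk.injEq]
  constructor
  · rintro ⟨⟨⟨hi1, hi2⟩, hj1, hj2⟩, hij⟩
    by_cases h : j = m + 1
    · right; exact ⟨i, ⟨hi1, by omega⟩, rfl, h.symm⟩
    · left; omega
  · rintro (⟨⟨⟨hi1, hi2⟩, hj1, hj2⟩, hij⟩ | ⟨k, ⟨hk1, hk2⟩, rfl, rfl⟩) <;> omega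

lemma tower_expansion {d n : ℕ}
    (F : ℕ → EuclideanSpace ℝ (Fin d) → EuclideanSpace ℝ (Fin d))
    (hF : ∀ i ∈ Finset.Icc 1 n, ContDiff ℝ 3 (F i))
    (z0 : EuclideanSpace ℝ (Fin d)) :
    ∀ m, m ≤ n →
    (fun l : ℝ => resTower l F m z0 -
        (z0 + l • ∑ i ∈ Icc 1 m, F i z0
            + l ^ 2 • ∑ p ∈ (Icc 1 m ×ˢ Icc 1 m).filter (fun p => p.1 < p.2),
                fderiv ℝ (F p.2) z0 (F p.1 z0)))
      =O[𝓝 0] (fun l : ℝ => l ^ 3) := by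
  intro m
  induction m with
  | zero =>
      intro _
      have : (fun l : ℝ => resTower l F 0 z0 -
          (z0 + l • ∑ i ∈ Icc 1 0, F i z0
              + l ^ 2 • ∑ p ∈ (Icc 1 0 ×ˢ Icc 1 0).filter (fun p => p.1 < p.2),
                  fderiv ℝ (F p.2) z0 (F p.1 z0))) = fun _ => 0 := by
        funext l; simp [resTower]
      rw [this]
      exact Asymptotics.isBigO_zero _ _
  | succ m ih =>
      intro hmn
      have ihm := ih (by omega)
      set A : EuclideanSpace ℝ (Fin d) := ∑ i ∈ Icc 1 m, F i z0 with hA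
      set B : EuclideanSpace ℝ (Fin d) :=
        ∑ p ∈ (Icc 1 m ×ˢ Icc 1 m).filter (fun p => p.1 < p.2),
          fderiv ℝ (F p.2) z0 (F p.1 z0) with hB
      have hFm : ContDiff ℝ 2 (F (m+1)) :=
        (hF (m+1) (by simp only [Finset.mem_Icc]; omega)).of_le (by norm_num)
      set g : ℝ → EuclideanSpace ℝ (Fin d) := fun l => resTower l F m z0 with hgdef
      have hg2 : (fun l => g l - (z0 + l • A)) =O[𝓝 0] fun l => l ^ 2 := by
        have hBo : (fun l : ℝ => l ^ 2 • B) =O[𝓝 0] fun l => l ^ 2 := by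
          apply Asymptotics.isBigO_of_le' (c := ‖B‖)
          intro l
          rw [norm_smul, mul_comm]
        have := (ihm.trans cube_bigO_sq).add hBo
        refine this.congr_left fun l => ?_
        abel
      have hquad := quad_approx (F (m+1)) hFm z0 A g hg2
      have hmul : (fun l => l • (F (m+1) (g l) -
          (F (m+1) z0 + l • fderiv ℝ (F (m+1)) z0 A))) =O[𝓝 0] fun l : ℝ => l ^ 3 := by
        have := (Asymptotics.isBigO_refl (fun l : ℝ => l) (𝓝 0)).smul hquad
        refine this.trans ?_
        refine Asymptotics.IsBigO.of_bound 1 ?_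
        filter_upwards with l
        simp only [smul_eq_mul, ← pow_succ', Real.norm_eq_abs, one_mul]
        norm_num
      have hsum := ihm.add hmul
      refine hsum.congr_left fun l => ?_
      -- finset identities
      have hA' : ∑ i ∈ Icc 1 (m+1), F i z0 = A + F (m+1) z0 := by
        rw [hA, Finset.sum_Icc_succ_top (by omega)]
      have hB' : ∑ p ∈ (Icc 1 (m+1) ×ˢ Icc 1 (m+1)).filter (fun p => p.1 < p.2),
            fderiv ℝ (F p.2) z0 (F p.1 z0)
          = B + fderiv ℝ (F (m+1)) z0 A := by
        rw [filter_pairs_succ, Finset.sum_union, Finset.sum_image (by intro a _ b _ h; exact (Prod.mk.injEq .. ▸ h).1)]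
        · rw [hB, hA, map_sum]
        · rw [Finset.disjoint_left]
          rintro ⟨i, j⟩ hp hq
          simp only [Finset.mem_filter, Finset.mem_product, Finset.mem_Icc] at hp
          simp only [Finset.mem_image, Finset.mem_Icc, Prod.mk.injEq] at hq
          obtain ⟨k, _, _, rfl⟩ := hq
          omega
      rw [hA', hB']
      have ht : resTower l F (m+1) z0 = g l + l • F (m+1) (g l) := rfl
      rw [ht]
      simp only [smul_add, smul_sub, smul_smul, ← pow_two]
      abel

/-- **Residual network expansion.** For an encoder `E`, `C³` residual branches
`F_1, …, F_n` and an affine decoder `D(z) = W z + b`, the network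
`f_λ(x) = D(R_λ(E(x)))` satisfies, at every input `x`,
`f_λ(x) = D(E(x)) + λ ∑ᵢ W(Fᵢ(E(x))) + λ² ∑_{i<j} W((D F_j)(E(x))(Fᵢ(E(x)))) + O(λ³)`
as `λ → 0`. -/
theorem residual_network_expansion (p d q n : ℕ)
    (E : EuclideanSpace ℝ (Fin p) → EuclideanSpace ℝ (Fin d))
    (F : ℕ → EuclideanSpace ℝ (Fin d) → EuclideanSpace ℝ (Fin d))
    (hF : ∀ i ∈ Finset.Icc 1 n, ContDiff ℝ 3 (F i))
    (W : EuclideanSpace ℝ (Fin d) →L[ℝ] EuclideanSpace ℝ (Fin q))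
    (b : EuclideanSpace ℝ (Fin q))
    (x : EuclideanSpace ℝ (Fin p)) :
    (fun lam : ℝ =>
        (W (resTower lam F n (E x)) + b) -
          ((W (E x) + b)
             + lam • ∑ i ∈ Finset.Icc 1 n, W (F i (E x))
             + lam ^ 2 •
               ∑ p ∈ (Finset.Icc 1 n ×ˢ Finset.Icc 1 n).filter (fun p => p.1 < p.2),
                 W (fderiv ℝ (F p.2) (E x) (F p.1 (E x)))))
      =O[𝓝 0] (fun lam : ℝ => lam ^ 3) := by
  have htow := tower_expansion F hF (E x) n le_rfl
  refine ((W.isBigO_comp _ (𝓝 0)).trans htow).congr_left fun l => ?_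
  simp only [map_sub, map_add, map_smul, map_sum]
  abel
end

section
/- Let d, n ∈ ℕ and let F_1, …, F_n : ℝ^d → ℝ^d each be twice continuously differentiable (ContDiff ℝ 2). For λ ∈ ℝ let R_λ = (id + λF_n) ∘ ⋯ ∘ (id + λF_1). Then for every z ∈ ℝ^d, the function λ ↦ R_λ(z) − ( z + λ·Σ_{i=1}^n F_i(z) ) is O(λ²) as λ → 0. -/
open Topology Asymptotics Finset

lemma resid_aux (d : ℕ)
    (F : ℕ → EuclideanSpace ℝ (Fin d) → EuclideanSpace ℝ (Fin d))
    (z : EuclideanSpace ℝ (Fin d)) :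
    ∀ n : ℕ, (∀ i ∈ Finset.Icc 1 n, ContDiff ℝ 2 (F i)) →
    (fun lam : ℝ =>
        resTower lam F n z - (z + lam • ∑ i ∈ Finset.Icc 1 n, F i z))
      =O[𝓝 0] (fun lam : ℝ => lam ^ 2) := by
  intro n
  induction n with
  | zero =>
    intro _
    simp only [resTower, Finset.Icc_self, id_eq]
    simpa using (isBigO_zero (α := ℝ) (fun lam : ℝ => lam ^ 2) (𝓝 0))
  | succ m ih =>
    intro hF
    have IH := ih (fun i hi => hF i (Finset.mem_Icc.mpr ⟨(Finset.mem_Icc.mp hi).1,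
      le_trans (Finset.mem_Icc.mp hi).2 (Nat.le_succ m)⟩))
    set g : ℝ → EuclideanSpace ℝ (Fin d) := fun lam => resTower lam F m z with hg
    -- lam ↦ lam is O(1) near 0
    have hlam1 : (fun lam : ℝ => lam) =O[𝓝 0] (fun _ : ℝ => (1 : ℝ)) := by
      simpa using (Filter.Tendsto.isBigO_one ℝ (Filter.tendsto_id : Filter.Tendsto id (𝓝 (0:ℝ)) (𝓝 0)))
    have hsq : (fun lam : ℝ => lam ^ 2) =O[𝓝 0] (fun lam : ℝ => lam) := by
      have := hlam1.mul (isBigO_refl (fun lam : ℝ => lam) (𝓝 0))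
      simpa [pow_two] using this
    have h1 : (fun lam : ℝ => g lam - z) =O[𝓝 0] (fun lam : ℝ => lam) := by
      have h2 : (fun lam : ℝ => lam • ∑ i ∈ Finset.Icc 1 m, F i z)
          =O[𝓝 0] (fun lam : ℝ => lam) := by
        refine isBigO_iff.mpr ⟨‖(∑ i ∈ Finset.Icc 1 m, F i z : EuclideanSpace ℝ (Fin d))‖,
          Filter.Eventually.of_forall fun lam => ?_⟩
        simp [norm_smul, mul_comm]
      have : (fun lam : ℝ => g lam - z) =
          fun lam : ℝ => (g lam - (z + lam • ∑ i ∈ Finset.Icc 1 m, F i z))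
            + lam • ∑ i ∈ Finset.Icc 1 m, F i z := by
        funext lam; abel
      rw [this]
      exact (IH.trans hsq).add h2
    have hgz : Filter.Tendsto g (𝓝 0) (𝓝 z) := by
      have h0 : Filter.Tendsto (fun lam : ℝ => g lam - z) (𝓝 0) (𝓝 0) :=
        h1.trans_tendsto (by exact (Filter.tendsto_id : Filter.Tendsto id (𝓝 (0:ℝ)) (𝓝 0)))
      have := h0.add (tendsto_const_nhds (x := z) (f := 𝓝 (0:ℝ)))
      simpa using this
    have hdiff : DifferentiableAt ℝ (F (m+1)) z :=
      ((hF (m+1) (Finset.mem_Icc.mpr ⟨Nat.succ_le_succ (Nat.zero_le m), le_refl _⟩)).differentiable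
        (by norm_num)).differentiableAt
    have h3 : (fun x => F (m+1) x - F (m+1) z) =O[𝓝 z] (fun x => x - z) :=
      hdiff.isBigO_sub
    have h4 : (fun lam : ℝ => F (m+1) (g lam) - F (m+1) z) =O[𝓝 0] (fun lam : ℝ => lam) :=
      (h3.comp_tendsto hgz).trans h1
    have h5 : (fun lam : ℝ => lam • (F (m+1) (g lam) - F (m+1) z))
        =O[𝓝 0] (fun lam : ℝ => lam ^ 2) := by
      have := (isBigO_refl (fun lam : ℝ => lam) (𝓝 0)).smul h4
      simpa [pow_two, smul_eq_mul] using this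
    have key : (fun lam : ℝ =>
        resTower lam F (m+1) z - (z + lam • ∑ i ∈ Finset.Icc 1 (m+1), F i z)) =
        fun lam : ℝ => (g lam - (z + lam • ∑ i ∈ Finset.Icc 1 m, F i z))
          + lam • (F (m+1) (g lam) - F (m+1) z) := by
      funext lam
      have hsum : ∑ i ∈ Finset.Icc 1 (m+1), F i z
          = (∑ i ∈ Finset.Icc 1 m, F i z) + F (m+1) z :=
        Finset.sum_Icc_succ_top (Nat.succ_le_succ (Nat.zero_le m)) _
      simp only [resTower, resBlock, Function.comp_apply, hsum, smul_add, smul_sub, ← hg]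
      abel
    rw [key]
    exact IH.add h5

/-- **First-order truncation of the residual tower expansion.** For `C²` residual
branches `F_1, …, F_n`, at every point `z` the residual tower satisfies
`R_λ(z) = z + λ ∑ᵢ Fᵢ(z) + O(λ²)` as `λ → 0`. -/
theorem residual_tower_first_order (d n : ℕ)
    (F : ℕ → EuclideanSpace ℝ (Fin d) → EuclideanSpace ℝ (Fin d))
    (hF : ∀ i ∈ Finset.Icc 1 n, ContDiff ℝ 2 (F i))
    (z : EuclideanSpace ℝ (Fin d)) :
    (fun lam : ℝ =>
        resTower lam F n z - (z + lam • ∑ i ∈ Finset.Icc 1 n, F i z))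
      =O[𝓝 0] (fun lam : ℝ => lam ^ 2) := by
  exact resid_aux d F z n hF
end

section
/- Let d, n ∈ ℕ and let F_1, …, F_n : ℝ^d → ℝ^d each be twice continuously differentiable (ContDiff ℝ 2). For λ ∈ ℝ let R_λ = (id + λF_n) ∘ ⋯ ∘ (id + λF_1). Then for every z ∈ ℝ^d, the second iterated derivative of the map λ ↦ R_λ(z) at λ = 0 equals 2 · Σ_{1 ≤ i < j ≤ n} (D F_j)(z)(F_i(z)), where (D F_j)(z) is the Fréchet derivative of F_j at z. -/
open Topology Asymptotics Finset

lemma pair_sum_succ {M : Type*} [AddCommMonoid M] (f : ℕ → ℕ → M) (m : ℕ) :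
    ∑ p ∈ ((Icc 1 (m+1)) ×ˢ (Icc 1 (m+1))).filter (fun p => p.1 < p.2), f p.1 p.2
    = (∑ p ∈ ((Icc 1 m) ×ˢ (Icc 1 m)).filter (fun p => p.1 < p.2), f p.1 p.2)
      + ∑ i ∈ Icc 1 m, f i (m+1) := by
  rw [Finset.sum_filter, Finset.sum_filter, Finset.sum_product, Finset.sum_product,
    ← Finset.insert_Icc_right_eq_Icc_add_one (by omega), Finset.sum_insert (by simp)]
  have h1 : ∀ i ∈ Icc 1 m, (∑ j ∈ insert (m+1) (Icc 1 m), if i < j then f i j else 0)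
      = f i (m+1) + ∑ j ∈ Icc 1 m, if i < j then f i j else 0 := by
    intro i hi
    rw [Finset.sum_insert (by simp)]
    simp only [Finset.mem_Icc] at hi
    rw [if_pos (by omega)]
  rw [Finset.sum_congr rfl h1, Finset.sum_add_distrib]
  have h2 : (∑ j ∈ insert (m+1) (Icc 1 m), if m+1 < j then f (m+1) j else 0) = 0 := by
    rw [Finset.sum_insert (by simp)]
    rw [if_neg (by omega), zero_add]
    apply Finset.sum_eq_zero
    intro j hj
    simp only [Finset.mem_Icc] at hj
    rw [if_neg (by omega)]
  rw [h2, zero_add, add_comm]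

lemma key (d : ℕ) (F : ℕ → EuclideanSpace ℝ (Fin d) → EuclideanSpace ℝ (Fin d))
    (z : EuclideanSpace ℝ (Fin d)) :
    ∀ m : ℕ, (∀ i ∈ Finset.Icc 1 m, ContDiff ℝ 2 (F i)) →
      ContDiff ℝ 2 (fun lam : ℝ => resTower lam F m z) ∧
      resTower 0 F m z = z ∧
      deriv (fun lam : ℝ => resTower lam F m z) 0 = ∑ i ∈ Icc 1 m, F i z ∧
      iteratedDeriv 2 (fun lam : ℝ => resTower lam F m z) 0 =
        (2 : ℝ) • ∑ p ∈ ((Icc 1 m) ×ˢ (Icc 1 m)).filter (fun p => p.1 < p.2),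
          fderiv ℝ (F p.2) z (F p.1 z) := by
  intro m
  induction m with
  | zero =>
    intro _
    refine ⟨contDiff_const, rfl, ?_, ?_⟩ <;> simp [resTower, iteratedDeriv_succ]
  | succ m IH =>
    intro hF
    obtain ⟨hg, hg0, hd0, hdd0⟩ := IH (fun i hi => hF i (by simp at hi ⊢; omega))
    set g : ℝ → EuclideanSpace ℝ (Fin d) := fun lam => resTower lam F m z with hgdef
    have hFm : ContDiff ℝ 2 (F (m+1)) := hF (m+1) (by simp)
    have hnew : (fun lam : ℝ => resTower lam F (m+1) z)
        = fun lam => g lam + lam • F (m+1) (g lam) := rfl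
    have hgd : Differentiable ℝ g := hg.differentiable two_ne_zero
    have hFmd : Differentiable ℝ (F (m+1)) := hFm.differentiable two_ne_zero
    -- derivative everywhere
    have hderiv : ∀ t : ℝ, HasDerivAt (fun lam => g lam + lam • F (m+1) (g lam))
        (deriv g t + (t • (fderiv ℝ (F (m+1)) (g t)) (deriv g t) + (1:ℝ) • F (m+1) (g t))) t := by
      intro t
      have h1 : HasDerivAt g (deriv g t) t := (hgd t).hasDerivAt
      have h2 : HasDerivAt (fun lam => F (m+1) (g lam))
          ((fderiv ℝ (F (m+1)) (g t)) (deriv g t)) t :=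
        ((hFmd (g t)).hasFDerivAt).comp_hasDerivAt t h1
      exact h1.add ((hasDerivAt_id t).smul h2)
    have hC : ContDiff ℝ 2 (fun lam : ℝ => g lam + lam • F (m+1) (g lam)) :=
      hg.add (contDiff_id.smul (hFm.comp hg))
    have hg0' : g 0 = z := hg0
    refine ⟨hnew ▸ hC, ?_, ?_, ?_⟩
    · show g 0 + (0:ℝ) • F (m+1) (g 0) = z
      rw [hg0']; simp
    · rw [hnew, (hderiv 0).deriv]
      rw [hd0, ← Finset.insert_Icc_right_eq_Icc_add_one (by omega), Finset.sum_insert (by simp), hg0']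
      simp [add_comm]
    · -- second derivative
      rw [hnew, iteratedDeriv_succ, iteratedDeriv_one]
      have hDfun : deriv (fun lam => g lam + lam • F (m+1) (g lam))
          = fun t => deriv g t + (t • (fderiv ℝ (F (m+1)) (g t)) (deriv g t)
              + F (m+1) (g t)) := by
        funext t
        simpa using (hderiv t).deriv
      rw [hDfun]
      -- differentiability of pieces at 0
      have hg2 : ContDiff ℝ ((1:ℕ)+1) g := by exact_mod_cast hg
      have hderivC : ContDiff ℝ 1 (deriv g) := (contDiff_succ_iff_deriv.mp hg2).2.2
      have hA : HasDerivAt (deriv g) (deriv (deriv g) 0) 0 :=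
        ((hderivC.differentiable one_ne_zero) 0).hasDerivAt
      have h2at0 : HasDerivAt (fun t => F (m+1) (g t))
          ((fderiv ℝ (F (m+1)) (g 0)) (deriv g 0)) 0 :=
        ((hFmd (g 0)).hasFDerivAt).comp_hasDerivAt 0 ((hgd 0).hasDerivAt)
      set u : ℝ → EuclideanSpace ℝ (Fin d) :=
        fun t => (fderiv ℝ (F (m+1)) (g t)) (deriv g t) with hudef
      have hfdC : ContDiff ℝ 1 (fun t => fderiv ℝ (F (m+1)) (g t)) :=
        (hFm.fderiv_right (by norm_num)).comp (hg.of_le (by norm_num))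
      have hu : DifferentiableAt ℝ u 0 :=
        ((hfdC.differentiable one_ne_zero) 0).clm_apply ((hderivC.differentiable one_ne_zero) 0)
      have hsmul : HasDerivAt (fun t => t • u t) (u 0) 0 := by
        have := (hasDerivAt_id (0:ℝ)).smul hu.hasDerivAt
        simp only [id, zero_smul, one_smul, zero_add] at this
        exact this
      have H : HasDerivAt (fun t => deriv g t + (t • u t + F (m+1) (g t)))
          (deriv (deriv g) 0 + (u 0 + u 0)) 0 := by
        have := hA.add (hsmul.add h2at0)
        exact this
      rw [H.deriv]
      have hdd : deriv (deriv g) 0 = iteratedDeriv 2 g 0 := by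
        rw [iteratedDeriv_succ, iteratedDeriv_one]
      have hu0 : u 0 = ∑ i ∈ Icc 1 m, fderiv ℝ (F (m+1)) z (F i z) := by
        show (fderiv ℝ (F (m+1)) (g 0)) (deriv g 0) = _
        rw [hg0', hd0]
        exact map_sum (fderiv ℝ (F (m+1)) z) _ _
      rw [hdd, hdd0, hu0, pair_sum_succ (fun i j => fderiv ℝ (F j) z (F i z)) m]
      rw [smul_add]
      congr 1
      rw [two_smul]

/-- **Order-2 ensemble term as the second λ-derivative.** For `C²` residual branches
`F_1, …, F_n`, at every point `z` the second iterated derivative of `λ ↦ R_λ(z)`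
at `λ = 0` equals `2 ∑_{i<j} (D F_j)(z)(Fᵢ(z))`. -/
theorem residual_tower_second_deriv_at_zero (d n : ℕ)
    (F : ℕ → EuclideanSpace ℝ (Fin d) → EuclideanSpace ℝ (Fin d))
    (hF : ∀ i ∈ Finset.Icc 1 n, ContDiff ℝ 2 (F i))
    (z : EuclideanSpace ℝ (Fin d)) :
    iteratedDeriv 2 (fun lam : ℝ => resTower lam F n z) 0 =
      (2 : ℝ) •
        ∑ p ∈ (Finset.Icc 1 n ×ˢ Finset.Icc 1 n).filter (fun p => p.1 < p.2),
          fderiv ℝ (F p.2) z (F p.1 z) :=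
  (key d F z n hF).2.2.2
end

section
/- Let p, d, q, n ∈ ℕ, let E : ℝ^p → ℝ^d be differentiable, let F_1, …, F_n : ℝ^d → ℝ^d each be three times continuously differentiable (ContDiff ℝ 3), let W : ℝ^d → ℝ^q be a continuous linear map and b ∈ ℝ^q, and define f_λ(x) = W(R_λ(E(x))) + b where R_λ = (id + λF_n) ∘ ⋯ ∘ (id + λF_1). Then for every x ∈ ℝ^p, the function λ ↦ (D f_λ)(x) − ( W ∘ (D E)(x) + λ · Σ_{i=1}^n W ∘ (D F_i)(E(x)) ∘ (D E)(x) ) is O(λ²) in operator norm as λ → 0, where D denotes the Fréchet derivative with respect to the input x. -/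
open Topology Asymptotics Finset

section Aux

variable {d : ℕ}

local notation "Ed" => EuclideanSpace ℝ (Fin d)

lemma resTower_zero (F : ℕ → Ed → Ed) (m : ℕ) : resTower (0 : ℝ) F m = id := by
  induction m with
  | zero => rfl
  | succ m ih =>
    funext z
    simp [resTower, resBlock, ih]

lemma resTower_differentiable {F : ℕ → Ed → Ed} {m : ℕ}
    (hF : ∀ i ∈ Finset.Icc 1 m, Differentiable ℝ (F i)) (lam : ℝ) :
    Differentiable ℝ (resTower lam F m) := by
  induction m with
  | zero => exact differentiable_id
  | succ m ih =>
    have h1 : Differentiable ℝ (F (m + 1)) := hF (m + 1) (by simp)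
    have h2 : Differentiable ℝ (resTower lam F m) :=
      ih fun i hi => hF i (Finset.Icc_subset_Icc_right (Nat.le_succ m) hi)
    exact (differentiable_id.add (h1.const_smul lam)).comp h2

lemma resTower_curve_diff {F : ℕ → Ed → Ed} (z₀ : Ed) {m : ℕ}
    (hF : ∀ i ∈ Finset.Icc 1 m, Differentiable ℝ (F i)) :
    Differentiable ℝ (fun lam : ℝ => resTower lam F m z₀) := by
  induction m with
  | zero => exact differentiable_const z₀
  | succ m ih =>
    have h1 : Differentiable ℝ (F (m + 1)) := hF (m + 1) (by simp)
    have ih' : Differentiable ℝ (fun lam : ℝ => resTower lam F m z₀) :=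
      ih fun i hi => hF i (Finset.Icc_subset_Icc_right (Nat.le_succ m) hi)
    have : (fun lam : ℝ => resTower lam F (m + 1) z₀)
        = fun lam : ℝ => resTower lam F m z₀
            + lam • F (m + 1) (resTower lam F m z₀) := rfl
    rw [this]
    exact ih'.add (differentiable_fun_id.smul (h1.comp ih'))

lemma fderiv_resBlock {G : Ed → Ed} (hG : Differentiable ℝ G) (lam : ℝ) (w : Ed) :
    fderiv ℝ (resBlock lam G) w = 1 + lam • fderiv ℝ G w := by
  have : resBlock lam G = fun z => z + lam • G z := rfl
  rw [this, fderiv_fun_add (g := fun z => lam • G z) differentiableAt_fun_id ((hG w).const_smul lam),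
    fderiv_fun_const_smul (hG w) lam, fderiv_fun_id, ContinuousLinearMap.one_def]

/-- helper: `fun lam => lam • C` is `O(lam)`. -/
lemma smul_const_isBigO_s9 {Y : Type*} [NormedAddCommGroup Y] [NormedSpace ℝ Y] (C : Y) :
    (fun lam : ℝ => lam • C) =O[𝓝 (0 : ℝ)] fun lam => lam := by
  refine IsBigO.of_bound ‖C‖ (Filter.Eventually.of_forall fun lam => ?_)
  rw [norm_smul]
  simp [Real.norm_eq_abs, mul_comm]

lemma lam_isBigO_one : (fun lam : ℝ => lam) =O[𝓝 (0 : ℝ)] (fun _ => (1 : ℝ)) := by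
  have h : Filter.Tendsto (fun lam : ℝ => lam) (𝓝 0) (𝓝 0) := Filter.tendsto_id
  exact h.isBigO_one ℝ

lemma sq_isBigO_lam : (fun lam : ℝ => lam ^ 2) =O[𝓝 (0 : ℝ)] fun lam => lam := by
  have := (lam_isBigO_one.mul (isBigO_refl (fun lam : ℝ => lam) (𝓝 0)))
  simpa [pow_two] using this

set_option synthInstance.maxHeartbeats 1000000 in
set_option maxHeartbeats 2000000 in
/-- **Key lemma**: first-order expansion of the Jacobian of the residual tower. -/
lemma tower_fderiv_expansion (F : ℕ → Ed → Ed) (z₀ : Ed) :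
    ∀ m : ℕ, (∀ i ∈ Finset.Icc 1 m, ContDiff ℝ 3 (F i)) →
    (fun lam : ℝ => fderiv ℝ (resTower lam F m) z₀
        - (1 + lam • ∑ i ∈ Finset.Icc 1 m, fderiv ℝ (F i) z₀)) =O[𝓝 (0 : ℝ)]
      fun lam => lam ^ 2 := by
  intro m
  induction m with
  | zero =>
    intro _
    have : (fun lam : ℝ => fderiv ℝ (resTower lam F 0) z₀
        - (1 + lam • ∑ i ∈ Finset.Icc 1 0, fderiv ℝ (F i) z₀))
        = fun _ => (0 : Ed →L[ℝ] Ed) := by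
      funext lam
      show fderiv ℝ (id : Ed → Ed) z₀ - _ = 0
      simp [fderiv_id, ContinuousLinearMap.one_def]
    rw [this]
    exact isBigO_zero _ _
  | succ m ih =>
    intro hF
    have hFm : ∀ i ∈ Finset.Icc 1 m, ContDiff ℝ 3 (F i) :=
      fun i hi => hF i (Finset.Icc_subset_Icc_right (Nat.le_succ m) hi)
    have hdiffF : ∀ i ∈ Finset.Icc 1 m, Differentiable ℝ (F i) :=
      fun i hi => (hFm i hi).differentiable (by norm_num)
    have hF1 : ContDiff ℝ 3 (F (m + 1)) := hF (m + 1) (by simp)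
    have hF1d : Differentiable ℝ (F (m + 1)) := hF1.differentiable (by norm_num)
    have hTow : ∀ lam : ℝ, Differentiable ℝ (resTower lam F m) :=
      fun lam => resTower_differentiable hdiffF lam
    set G : ℝ → (Ed →L[ℝ] Ed) := fun lam => fderiv ℝ (resTower lam F m) z₀ with hGdef
    set zc : ℝ → Ed := fun lam => resTower lam F m z₀ with hzcdef
    set A : ℝ → (Ed →L[ℝ] Ed) := fun lam => fderiv ℝ (F (m + 1)) (zc lam) with hAdef
    set S : Ed →L[ℝ] Ed := ∑ i ∈ Finset.Icc 1 m, fderiv ℝ (F i) z₀ with hSdef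
    -- chain rule for the new block
    have step1 : ∀ lam : ℝ,
        fderiv ℝ (resTower lam F (m + 1)) z₀ = (1 + lam • A lam) * G lam := by
      intro lam
      have hblock : Differentiable ℝ (resBlock lam (F (m + 1))) :=
        differentiable_id.add (hF1d.const_smul lam)
      have := fderiv_comp (𝕜 := ℝ) z₀ (hblock (zc lam)) ((hTow lam) z₀)
      show fderiv ℝ (resBlock lam (F (m + 1)) ∘ resTower lam F m) z₀ = _
      rw [this, fderiv_resBlock hF1d lam (zc lam)]
      rfl
    -- differentiability of lam ↦ A lam at 0
    have hzc : Differentiable ℝ zc := resTower_curve_diff z₀ hdiffF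
    have hdF2 : ContDiff ℝ 2 (fderiv ℝ (F (m + 1))) :=
      hF1.fderiv_right (by norm_num)
    have hdF : Differentiable ℝ (fderiv ℝ (F (m + 1))) :=
      hdF2.differentiable (by norm_num)
    have hA_diff : DifferentiableAt ℝ A 0 :=
      (hdF (zc 0)).comp 0 (hzc 0)
    have hzc0 : zc 0 = z₀ := by simp [hzcdef, resTower_zero]
    have hA0 : A 0 = fderiv ℝ (F (m + 1)) z₀ := by rw [hAdef]; simp [hzc0]
    have hA_sub : (fun lam : ℝ => A lam - A 0) =O[𝓝 (0 : ℝ)] fun lam => lam := by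
      simpa using hA_diff.isBigO_sub
    have hA_bdd : (fun lam : ℝ => A lam) =O[𝓝 (0 : ℝ)] (fun _ => (1 : ℝ)) :=
      Filter.Tendsto.isBigO_one _ hA_diff.continuousAt
    have hIH := ih hFm
    have hG1 : (fun lam : ℝ => G lam - 1) =O[𝓝 (0 : ℝ)] fun lam => lam := by
      have h1 : (fun lam : ℝ => G lam - (1 + lam • S)) =O[𝓝 (0 : ℝ)]
          fun lam => lam := hIH.trans sq_isBigO_lam
      have h2 := smul_const_isBigO_s9 (Y := Ed →L[ℝ] Ed) S
      have := h1.add h2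
      refine this.congr_left fun lam => ?_
      abel
    have hX : (fun lam : ℝ => A lam * G lam - A 0) =O[𝓝 (0 : ℝ)] fun lam => lam := by
      have h1 : (fun lam : ℝ => A lam * (G lam - 1)) =O[𝓝 (0 : ℝ)]
          fun lam => lam := by simpa using hA_bdd.mul hG1
      have := h1.add hA_sub
      refine this.congr_left fun lam => ?_
      rw [mul_sub, mul_one]
      abel
    -- assemble
    have hsum : ∑ i ∈ Finset.Icc 1 (m + 1), fderiv ℝ (F i) z₀
        = S + fderiv ℝ (F (m + 1)) z₀ := by
      rw [hSdef, ← Finset.insert_Icc_right_eq_Icc_add_one (by omega : 1 ≤ m + 1),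
        Finset.sum_insert (by simp)]
      abel
    have key : (fun lam : ℝ => fderiv ℝ (resTower lam F (m + 1)) z₀
        - (1 + lam • ∑ i ∈ Finset.Icc 1 (m + 1), fderiv ℝ (F i) z₀))
        = fun lam : ℝ => (G lam - (1 + lam • S))
            + lam • (A lam * G lam - A 0) := by
      funext lam
      haveI : IsScalarTower ℝ (Ed →L[ℝ] Ed) (Ed →L[ℝ] Ed) :=
        ⟨fun a f g => by ext v; simp [smul_eq_mul, ContinuousLinearMap.mul_apply]⟩
      rw [step1 lam, hsum, ← hA0, add_mul, one_mul, smul_mul_assoc, smul_add, smul_sub]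
      abel
    rw [key]
    have h2 : (fun lam : ℝ => lam • (A lam * G lam - A 0)) =O[𝓝 (0 : ℝ)]
        fun lam => lam ^ 2 := by
      have := (isBigO_refl (fun lam : ℝ => lam) (𝓝 0)).smul hX
      simpa [pow_two, smul_eq_mul] using this
    exact hIH.add h2

end Aux

/-- **Input-Jacobian expansion of the residual network.** For a differentiable
encoder `E`, `C³` residual branches `F_1, …, F_n` and an affine decoder
`D(z) = W z + b`, the Fréchet derivative in `x` of `f_λ(x) = W(R_λ(E(x))) + b`
satisfies `(D f_λ)(x) = W ∘ (D E)(x) + λ ∑ᵢ W ∘ (D Fᵢ)(E(x)) ∘ (D E)(x) + O(λ²)`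
in operator norm as `λ → 0`. -/
theorem residual_network_jacobian_expansion (p d q n : ℕ)
    (E : EuclideanSpace ℝ (Fin p) → EuclideanSpace ℝ (Fin d))
    (hE : Differentiable ℝ E)
    (F : ℕ → EuclideanSpace ℝ (Fin d) → EuclideanSpace ℝ (Fin d))
    (hF : ∀ i ∈ Finset.Icc 1 n, ContDiff ℝ 3 (F i))
    (W : EuclideanSpace ℝ (Fin d) →L[ℝ] EuclideanSpace ℝ (Fin q))
    (b : EuclideanSpace ℝ (Fin q))
    (x : EuclideanSpace ℝ (Fin p)) :
    (fun lam : ℝ =>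
        fderiv ℝ (fun y => W (resTower lam F n (E y)) + b) x -
          (W.comp (fderiv ℝ E x)
             + lam • ∑ i ∈ Finset.Icc 1 n,
                 W.comp ((fderiv ℝ (F i) (E x)).comp (fderiv ℝ E x))))
      =O[𝓝 0] (fun lam : ℝ => lam ^ 2) := by
  have hdiffF : ∀ i ∈ Finset.Icc 1 n, Differentiable ℝ (F i) :=
    fun i hi => (hF i hi).differentiable (by norm_num)
  set z₀ := E x with hz₀
  set DE := fderiv ℝ E x with hDE
  set G : ℝ → (EuclideanSpace ℝ (Fin d) →L[ℝ] EuclideanSpace ℝ (Fin d)) :=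
    fun lam => fderiv ℝ (resTower lam F n) z₀ with hGdef
  set S : EuclideanSpace ℝ (Fin d) →L[ℝ] EuclideanSpace ℝ (Fin d) :=
    ∑ i ∈ Finset.Icc 1 n, fderiv ℝ (F i) z₀ with hSdef
  -- compute the full fderiv
  have hfd : ∀ lam : ℝ,
      fderiv ℝ (fun y => W (resTower lam F n (E y)) + b) x
        = W.comp ((G lam).comp DE) := by
    intro lam
    have hTow : Differentiable ℝ (resTower lam F n) :=
      resTower_differentiable hdiffF lam
    have hcomp : HasFDerivAt (fun y => resTower lam F n (E y)) ((G lam).comp DE) x :=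
      ((hTow z₀).hasFDerivAt).comp x (hE x).hasFDerivAt
    have hcomp2 : HasFDerivAt (fun y => W (resTower lam F n (E y)) + b)
        (W.comp ((G lam).comp DE)) x := by
      exact ((W.hasFDerivAt.comp x hcomp).add_const b)
    exact hcomp2.fderiv
  -- rewrite the difference through `W ∘ _ ∘ DE`
  have key : (fun lam : ℝ =>
      fderiv ℝ (fun y => W (resTower lam F n (E y)) + b) x -
        (W.comp DE + lam • ∑ i ∈ Finset.Icc 1 n,
            W.comp ((fderiv ℝ (F i) z₀).comp DE)))
      = fun lam : ℝ => W.comp (((G lam - (1 + lam • S))).comp DE) := by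
    funext lam
    rw [hfd lam]
    ext v
    simp [ContinuousLinearMap.sum_apply, map_sum, hSdef, Finset.smul_sum, sub_add_eq_sub_sub]
  have hΔ := tower_fderiv_expansion F z₀ n hF
  rw [key]
  refine IsBigO.trans ?_ hΔ
  refine IsBigO.of_bound (‖W‖ * ‖DE‖) (Filter.Eventually.of_forall fun lam => ?_)
  calc ‖W.comp ((G lam - (1 + lam • S)).comp DE)‖
      ≤ ‖W‖ * ‖(G lam - (1 + lam • S)).comp DE‖ := ContinuousLinearMap.opNorm_comp_le _ _
    _ ≤ ‖W‖ * (‖G lam - (1 + lam • S)‖ * ‖DE‖) := by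
        gcongr
        exact ContinuousLinearMap.opNorm_comp_le _ _
    _ = ‖W‖ * ‖DE‖ * ‖G lam - (1 + lam • S)‖ := by ring
end

section
/- Let p, d, q, n ∈ ℕ, let E : ℝ^p → ℝ^d be any map, let F_1, …, F_n : ℝ^d → ℝ^d each be continuously differentiable (ContDiff ℝ 1), let W : ℝ^d → ℝ^q be a continuous linear map and b ∈ ℝ^q, and define f_λ(x) = W(R_λ(E(x))) + b with R_λ = (id + λF_n) ∘ ⋯ ∘ (id + λF_1). Then for every x ∈ ℝ^p, the map λ ↦ f_λ(x) has derivative W( Σ_{i=1}^n F_i(E(x)) ) at λ = 0 (in the sense of HasDerivAt). -/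
open Topology Asymptotics Finset

lemma resTower_zero_s12 {d : ℕ} (F : ℕ → EuclideanSpace ℝ (Fin d) → EuclideanSpace ℝ (Fin d)) :
    ∀ m z, resTower (0 : ℝ) F m z = z := by
  intro m
  induction m with
  | zero => intro z; rfl
  | succ m ih =>
    intro z
    simp [resTower, resBlock, ih]

lemma resTower_hasDerivAt {d : ℕ}
    (F : ℕ → EuclideanSpace ℝ (Fin d) → EuclideanSpace ℝ (Fin d))
    (z : EuclideanSpace ℝ (Fin d)) :
    ∀ m, (∀ i ∈ Finset.Icc 1 m, Differentiable ℝ (F i)) →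
      HasDerivAt (fun lam : ℝ => resTower lam F m z)
        (∑ i ∈ Finset.Icc 1 m, F i z) 0 := by
  intro m
  induction m with
  | zero =>
    intro _
    simpa [resTower] using (hasDerivAt_const (0 : ℝ) z)
  | succ m ih =>
    intro hF
    have hF' : ∀ i ∈ Finset.Icc 1 m, Differentiable ℝ (F i) := by
      intro i hi
      exact hF i (Finset.mem_Icc.mpr ⟨(Finset.mem_Icc.mp hi).1, (Finset.mem_Icc.mp hi).2.trans (Nat.le_succ m)⟩)
    have h1 := ih hF'
    have hg0 : resTower (0 : ℝ) F m z = z := resTower_zero_s12 F m z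
    have hFm : Differentiable ℝ (F (m + 1)) :=
      hF (m + 1) (Finset.mem_Icc.mpr ⟨Nat.succ_le_succ (Nat.zero_le m), le_rfl⟩)
    have h2 : HasDerivAt (fun lam : ℝ => F (m + 1) (resTower lam F m z))
        ((fderiv ℝ (F (m + 1)) (resTower (0:ℝ) F m z)) (∑ i ∈ Finset.Icc 1 m, F i z)) 0 :=
      (hFm _).hasFDerivAt.comp_hasDerivAt 0 h1
    have h3 := (hasDerivAt_id (0 : ℝ)).smul h2
    have h4 := h1.add h3
    have h5 : HasDerivAt (fun lam : ℝ => resTower lam F (m + 1) z)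
        ((∑ i ∈ Finset.Icc 1 m, F i z) + F (m + 1) z) 0 := by
      have e1 : (fun lam : ℝ => resTower lam F (m + 1) z) =
          fun lam : ℝ => resTower lam F m z + lam • F (m + 1) (resTower lam F m z) := by
        funext lam; rfl
      have e2 : (∑ i ∈ Finset.Icc 1 m, F i z) + F (m + 1) z = (∑ i ∈ Finset.Icc 1 m, F i z) +
          ((0 : ℝ) • (fderiv ℝ (F (m + 1)) (resTower (0:ℝ) F m z)) (∑ i ∈ Finset.Icc 1 m, F i z)
            + (1 : ℝ) • F (m + 1) (resTower (0:ℝ) F m z)) := by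
        simp [hg0]
      rw [e1, e2]
      exact h4
    rw [Finset.sum_Icc_succ_top (Nat.succ_le_succ (Nat.zero_le m))]
    exact h5

/-- **First-order ensemble `M₁` as the λ-derivative of the network output.** For an
encoder `E`, `C¹` residual branches `F_1, …, F_n` and an affine decoder
`D(z) = W z + b`, at every input `x` the map `λ ↦ W(R_λ(E(x))) + b` has derivative
`W(∑ᵢ Fᵢ(E(x)))` at `λ = 0`. -/
theorem residual_network_deriv_at_zero (p d q n : ℕ)
    (E : EuclideanSpace ℝ (Fin p) → EuclideanSpace ℝ (Fin d))
    (F : ℕ → EuclideanSpace ℝ (Fin d) → EuclideanSpace ℝ (Fin d))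
    (hF : ∀ i ∈ Finset.Icc 1 n, ContDiff ℝ 1 (F i))
    (W : EuclideanSpace ℝ (Fin d) →L[ℝ] EuclideanSpace ℝ (Fin q))
    (b : EuclideanSpace ℝ (Fin q))
    (x : EuclideanSpace ℝ (Fin p)) :
    HasDerivAt (fun lam : ℝ => W (resTower lam F n (E x)) + b)
      (W (∑ i ∈ Finset.Icc 1 n, F i (E x))) 0 := by
  have h := resTower_hasDerivAt F (E x) n (fun i hi => (hF i hi).differentiable one_ne_zero)
  exact (W.hasFDerivAt.comp_hasDerivAt 0 h).add_const b
end
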